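/- arXiv:1505.01961 — 4 statements merged into one kernel-verified Lean document; each statement's English description precedes it below -/
import Mathlib

section
/- The number of Motzkin paths of length n all of whose horizontal steps lie at level k equals Σ_{j=0}^{⌊n/2⌋} Σ_i p(2j, k, i) · C(n - 2j + i - 1, n - 2j), where p(2j, k, i) is the number of Dyck paths of length 2j having exactly i points at height k. -/
/-- A step of a Dyck path: `true` = up step (1,1), `false` = down step (1,-1). -/
def dstep (b : Bool) : ℤ := if b then 1 else -1

/-- Height of the path after its first `k` steps. -/
def dheight (p : List Bool) (k : ℕ) : ℤ := ((p.take k).map dstep).sum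

/-- A Dyck path: ends at height 0 and never goes below the x-axis. -/
def IsDyck (p : List Bool) : Prop :=
  (p.map dstep).sum = 0 ∧ ∀ k, 0 ≤ dheight p k

/-- Number of lattice points of the path at level `l` (its "feet" at level `l`). -/
def feet (p : List Bool) (l : ℤ) : ℕ :=
  ((List.range (p.length + 1)).map (dheight p)).count l

/-- The frame of a Dyck path: at position `k`, the number of its points at height `k`. -/
def frame (p : List Bool) : ℕ → ℕ := fun k => feet p (k : ℤ)

/-- `DyckFeet m l j` = number of Dyck paths of length `m` with exactly `j` points at level `l`. -/
noncomputable def DyckFeet (m : ℕ) (l : ℤ) (j : ℕ) : ℕ :=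
  Set.ncard {p : List Bool | p.length = m ∧ IsDyck p ∧ feet p l = j}

/-- A sequence is admissible if it is the frame of some Dyck path. -/
def Admissible (I : ℕ → ℕ) : Prop := ∃ p : List Bool, IsDyck p ∧ frame p = I

/-- A step of a Motzkin path. -/
inductive MStep
  | up
  | level
  | down

/-- The vertical displacement of a Motzkin step. -/
def mval : MStep → ℤ
  | .up => 1
  | .level => 0
  | .down => -1

/-- Height of a Motzkin path after its first  steps. -/
def mheight (p : List MStep) (k : ℕ) : ℤ := ((p.take k).map mval).sum

/-- A Motzkin path: ends at height 0 and never goes below the x-axis. -/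
def IsMotzkin (p : List MStep) : Prop :=
  (p.map mval).sum = 0 ∧ ∀ k, 0 ≤ mheight p k

/-- A k-Motzkin path: a Motzkin path all of whose horizontal steps lie at height k. -/
def IsKMotzkin (k : ℤ) (p : List MStep) : Prop :=
  IsMotzkin p ∧ ∀ i < p.length, p.getD i .up = .level → mheight p i = k

-- auxiliary development
instance : DecidableEq MStep := fun a b => by
  cases a <;> cases b <;> first | exact isTrue rfl | exact isFalse (by intro h; exact MStep.noConfusion h)

instance : Fintype MStep :=
  ⟨⟨{MStep.up, MStep.level, MStep.down}, by decide⟩, fun x => by cases x <;> decide⟩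

def toB : MStep → Option Bool
  | .up => some true
  | .down => some false
  | .level => none

def toM (b : Bool) : MStep := if b then .up else .down

def dOf (p : List MStep) : List Bool := p.filterMap toB

def levels : List MStep → Multiset ℕ
  | [] => 0
  | .level :: p => 0 ::ₘ levels p
  | .up :: p => (levels p).map (· + 1)
  | .down :: p => (levels p).map (· + 1)

def decode : List Bool → (ℕ → ℕ) → List MStep
  | [], c => List.replicate (c 0) .level
  | b :: q, c => List.replicate (c 0) .level ++ toM b :: decode q (fun i => c (i + 1))

lemma mheight_zero (p : List MStep) : mheight p 0 = 0 := rfl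
lemma mheight_nil (t : ℕ) : mheight [] t = 0 := by simp [mheight]
lemma mheight_cons (a : MStep) (p : List MStep) (t : ℕ) :
    mheight (a :: p) (t + 1) = mval a + mheight p t := by
  simp [mheight, List.take_succ_cons]
lemma dheight_zero (q : List Bool) : dheight q 0 = 0 := rfl
lemma dheight_nil (t : ℕ) : dheight [] t = 0 := by simp [dheight]
lemma dheight_cons (b : Bool) (q : List Bool) (t : ℕ) :
    dheight (b :: q) (t + 1) = dstep b + dheight q t := by
  simp [dheight, List.take_succ_cons]

lemma mval_toM (b : Bool) : mval (toM b) = dstep b := by cases b <;> rfl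
lemma toB_toM (b : Bool) : toB (toM b) = some b := by cases b <;> rfl

def MinOK (v : ℤ) (p : List MStep) : Prop := ∀ t, 0 ≤ v + mheight p t
def DOK (v : ℤ) (q : List Bool) : Prop := ∀ t, 0 ≤ v + dheight q t
def LOK (k v : ℤ) (p : List MStep) : Prop :=
  ∀ i < p.length, p.getD i .up = .level → v + mheight p i = k

lemma MinOK_nil {v : ℤ} : MinOK v [] ↔ 0 ≤ v := by
  constructor
  · intro h; simpa [mheight_nil] using h 0
  · intro h t; simpa [mheight_nil] using h

lemma DOK_nil {v : ℤ} : DOK v [] ↔ 0 ≤ v := by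
  constructor
  · intro h; simpa [dheight_nil] using h 0
  · intro h t; simpa [dheight_nil] using h

lemma MinOK_cons {v : ℤ} {a : MStep} {p : List MStep} :
    MinOK v (a :: p) ↔ 0 ≤ v ∧ MinOK (v + mval a) p := by
  constructor
  · intro h
    refine ⟨by simpa [mheight_zero] using h 0, fun t => ?_⟩
    simpa [mheight_cons, add_assoc] using h (t + 1)
  · rintro ⟨h0, h⟩ t
    cases t with
    | zero => simpa [mheight_zero] using h0
    | succ t => simpa [mheight_cons, add_assoc] using h t

lemma DOK_cons {v : ℤ} {b : Bool} {q : List Bool} :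
    DOK v (b :: q) ↔ 0 ≤ v ∧ DOK (v + dstep b) q := by
  constructor
  · intro h
    refine ⟨by simpa [dheight_zero] using h 0, fun t => ?_⟩
    simpa [dheight_cons, add_assoc] using h (t + 1)
  · rintro ⟨h0, h⟩ t
    cases t with
    | zero => simpa [dheight_zero] using h0
    | succ t => simpa [dheight_cons, add_assoc] using h t

lemma LOK_nil {k v : ℤ} : LOK k v [] := by intro i hi; simp at hi

lemma LOK_cons {k v : ℤ} {a : MStep} {p : List MStep} :
    LOK k v (a :: p) ↔ (a = .level → v = k) ∧ LOK k (v + mval a) p := by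
  constructor
  · intro h
    constructor
    · intro ha
      have := h 0 (by simp) (by simpa using ha)
      simpa [mheight_zero] using this
    · intro i hi hget
      have := h (i + 1) (by simpa using Nat.succ_lt_succ hi) (by simpa using hget)
      simpa [mheight_cons, add_assoc] using this
  · rintro ⟨h0, h⟩ i hi hget
    cases i with
    | zero => simp only [List.getD_cons_zero] at hget
              simpa [mheight_zero] using h0 hget
    | succ i =>
      have := h i (by simpa using Nat.lt_of_succ_lt_succ hi) (by simpa using hget)
      simpa [mheight_cons, add_assoc] using this

lemma toM_ne_level (b : Bool) : toM b ≠ .level := by cases b <;> simp [toM]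

lemma MinOK_replicate_append {v : ℤ} {m : ℕ} {p : List MStep} :
    MinOK v (List.replicate m MStep.level ++ p) ↔ 0 ≤ v ∧ MinOK v p := by
  induction m with
  | zero =>
    simp only [List.replicate, List.nil_append]
    constructor
    · intro h; exact ⟨by simpa [mheight_zero] using h 0, h⟩
    · exact fun h => h.2
  | succ m ih =>
    rw [List.replicate_succ, List.cons_append, MinOK_cons,
      show mval MStep.level = 0 from rfl, add_zero, ih]
    tauto

lemma LOK_replicate_append {k v : ℤ} {m : ℕ} {p : List MStep} :
    LOK k v (List.replicate m MStep.level ++ p) ↔ (m ≠ 0 → v = k) ∧ LOK k v p := by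
  induction m with
  | zero => simp [List.replicate]
  | succ m ih =>
    rw [List.replicate_succ, List.cons_append, LOK_cons,
      show mval MStep.level = 0 from rfl, add_zero, ih]
    constructor
    · rintro ⟨h0, _, h2⟩; exact ⟨fun _ => h0 rfl, h2⟩
    · rintro ⟨h0, h2⟩
      exact ⟨fun _ => h0 (Nat.succ_ne_zero m), fun _ => h0 (Nat.succ_ne_zero m), h2⟩

lemma dOf_decode (q : List Bool) (c : ℕ → ℕ) : dOf (decode q c) = q := by
  induction q generalizing c with
  | nil =>
    simp only [decode, dOf]
    induction (c 0) with
    | zero => rfl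
    | succ m ih => rw [List.replicate_succ]; simpa [toB] using ih
  | cons b q ih =>
    simp only [decode, dOf, List.filterMap_append, List.filterMap_cons, toB_toM]
    have h1 : (List.replicate (c 0) MStep.level).filterMap toB = [] := by
      induction (c 0) with
      | zero => rfl
      | succ m ih2 => rw [List.replicate_succ]; simpa [toB] using ih2
    rw [h1]
    simpa [dOf] using ih _

lemma msum_replicate_append (m : ℕ) (p : List MStep) :
    ((List.replicate m MStep.level ++ p).map mval).sum = (p.map mval).sum := by
  simp [List.map_append, List.map_replicate, show mval MStep.level = 0 from rfl]

lemma msum_decode (q : List Bool) (c : ℕ → ℕ) :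
    ((decode q c).map mval).sum = (q.map dstep).sum := by
  induction q generalizing c with
  | nil => simp [decode, List.map_replicate, show mval MStep.level = 0 from rfl]
  | cons b q ih =>
    rw [decode, msum_replicate_append]
    simp [mval_toM, ih]

lemma length_decode (q : List Bool) (c : ℕ → ℕ) :
    (decode q c).length = q.length + ∑ i ∈ Finset.range (q.length + 1), c i := by
  induction q generalizing c with
  | nil => simp [decode]
  | cons b q ih =>
    simp only [decode, List.length_append, List.length_replicate, List.length_cons, ih]
    rw [Finset.sum_range_succ' (fun i => c i)]
    omega

lemma MinOK_decode {v : ℤ} (q : List Bool) (c : ℕ → ℕ) :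
    MinOK v (decode q c) ↔ DOK v q := by
  induction q generalizing v c with
  | nil =>
    rw [decode,
      show (List.replicate (c 0) MStep.level) = List.replicate (c 0) MStep.level ++ [] by simp,
      MinOK_replicate_append, MinOK_nil, DOK_nil]
    tauto
  | cons b q ih =>
    rw [decode, MinOK_replicate_append, MinOK_cons, mval_toM, ih, DOK_cons]
    tauto

lemma LOK_decode {k v : ℤ} (q : List Bool) (c : ℕ → ℕ) :
    LOK k v (decode q c) ↔ ∀ i < q.length + 1, c i ≠ 0 → v + dheight q i = k := by
  induction q generalizing v c with
  | nil =>
    rw [decode,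
      show (List.replicate (c 0) MStep.level) = List.replicate (c 0) MStep.level ++ [] by simp,
      LOK_replicate_append]
    constructor
    · rintro ⟨h0, _⟩ i hi hc
      have hi0 : i = 0 := by simp at hi; omega
      subst hi0
      simpa [dheight_zero] using h0 hc
    · intro h
      exact ⟨fun hc => by simpa [dheight_zero] using h 0 (by simp) hc, LOK_nil⟩
  | cons b q ih =>
    rw [decode, LOK_replicate_append, LOK_cons, mval_toM, ih]
    constructor
    · rintro ⟨h0, _, h2⟩ i hi hc
      cases i with
      | zero => simpa [dheight_zero] using h0 hc
      | succ i =>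
        have := h2 i (by simpa using Nat.lt_of_succ_lt_succ hi) hc
        rw [dheight_cons]; linarith
    · intro h
      refine ⟨fun hc => by simpa [dheight_zero] using h 0 (by simp) hc,
        fun hh => absurd hh (toM_ne_level b), ?_⟩
      intro i hi hc
      have := h (i + 1) (by simp at hi ⊢; omega) hc
      rw [dheight_cons] at this; linarith

lemma levels_replicate_append (m : ℕ) (p : List MStep) :
    levels (List.replicate m MStep.level ++ p) = Multiset.replicate m 0 + levels p := by
  induction m with
  | zero => simp
  | succ m ih => rw [List.replicate_succ, List.cons_append, levels, ih, Multiset.replicate_succ]; simp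

lemma levels_toM_cons (b : Bool) (p : List MStep) :
    levels (toM b :: p) = (levels p).map (· + 1) := by
  cases b <;> rfl

lemma count_levels_decode (q : List Bool) (c : ℕ → ℕ) (x : ℕ) :
    (levels (decode q c)).count x = if x < q.length + 1 then c x else 0 := by
  induction q generalizing c x with
  | nil =>
    rw [decode, show (List.replicate (c 0) MStep.level) = List.replicate (c 0) MStep.level ++ [] by simp,
      levels_replicate_append]
    cases x with
    | zero => simp [levels, Multiset.count_replicate]
    | succ x => simp [levels, Multiset.count_replicate]
  | cons b q ih =>
    rw [decode, levels_replicate_append, levels_toM_cons]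
    cases x with
    | zero =>
      have h0 : Multiset.count 0 ((levels (decode q fun i => c (i+1))).map (· + 1)) = 0 := by
        simp only [Multiset.count_eq_zero, Multiset.mem_map]
        rintro ⟨a, _, ha⟩; omega
      simp [Multiset.count_replicate, h0]
    | succ x =>
      rw [Multiset.count_add, Multiset.count_replicate,
        Multiset.count_map_eq_count' _ _ (add_left_injective 1),
        ih]
      rw [if_neg (show ¬(0 = x + 1) by omega)]
      simp only [List.length_cons, zero_add]
      split_ifs <;> omega

lemma decode_congr (q : List Bool) {c c' : ℕ → ℕ} (h : ∀ i, c i = c' i) :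
    decode q c = decode q c' := by
  have := funext h
  subst this
  rfl

lemma decode_bump (q : List Bool) (c c' : ℕ → ℕ) (h0 : c' 0 = c 0 + 1)
    (h : ∀ i, c' (i + 1) = c (i + 1)) :
    decode q c' = MStep.level :: decode q c := by
  cases q with
  | nil => rw [decode, decode, h0, List.replicate_succ]
  | cons b q =>
    rw [decode, decode, h0, List.replicate_succ, List.cons_append]
    rw [decode_congr q (fun i => h i)]

lemma decode_reconstruct (p : List MStep) :
    decode (dOf p) (fun i => (levels p).count i) = p := by
  induction p with
  | nil => simp [dOf, decode, levels]
  | cons a p ih =>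
    cases a with
    | level =>
      have hd : dOf (MStep.level :: p) = dOf p := rfl
      rw [hd]
      rw [decode_bump (dOf p) (fun i => (levels p).count i)
        (fun i => (levels (MStep.level :: p)).count i)
        (by rw [levels]; simp) (by intro i; rw [levels]; simp), ih]
    | up =>
      have hd : dOf (MStep.up :: p) = true :: dOf p := by simp [dOf, toB]
      rw [hd, decode]
      have h0 : (levels (MStep.up :: p)).count 0 = 0 := by
        rw [levels]
        simp only [Multiset.count_eq_zero, Multiset.mem_map]
        rintro ⟨a, _, ha⟩; omega
      rw [h0]
      have hsh : (fun i => (levels (MStep.up :: p)).count (i + 1)) =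
          (fun i => (levels p).count i) := by
        funext i
        rw [levels, Multiset.count_map_eq_count' _ _ (add_left_injective 1)]
      simp only [List.replicate_zero, List.nil_append, hsh, ih]
      rfl
    | down =>
      have hd : dOf (MStep.down :: p) = false :: dOf p := by simp [dOf, toB]
      rw [hd, decode]
      have h0 : (levels (MStep.down :: p)).count 0 = 0 := by
        rw [levels]
        simp only [Multiset.count_eq_zero, Multiset.mem_map]
        rintro ⟨a, _, ha⟩; omega
      rw [h0]
      have hsh : (fun i => (levels (MStep.down :: p)).count (i + 1)) =
          (fun i => (levels p).count i) := by
        funext i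
        rw [levels, Multiset.count_map_eq_count' _ _ (add_left_injective 1)]
      simp only [List.replicate_zero, List.nil_append, hsh, ih]
      rfl

lemma length_eq_dOf_add_levels (p : List MStep) :
    p.length = (dOf p).length + Multiset.card (levels p) := by
  induction p with
  | nil => simp [dOf, levels]
  | cons a p ih =>
    cases a with
    | level => simp [dOf, toB, levels, ih, show List.filterMap toB (MStep.level :: p) = List.filterMap toB p from rfl]; omega
    | up => simp [dOf, toB, levels, ih]; omega
    | down => simp [dOf, toB, levels, ih]; omega

lemma isKMotzkin_iff (k : ℤ) (p : List MStep) :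
    IsKMotzkin k p ↔ ((p.map mval).sum = 0 ∧ MinOK 0 p) ∧ LOK k 0 p := by
  unfold IsKMotzkin IsMotzkin MinOK LOK
  simp [zero_add]

lemma isDyck_iff (q : List Bool) :
    IsDyck q ↔ (q.map dstep).sum = 0 ∧ DOK 0 q := by
  unfold IsDyck DOK
  simp [zero_add]

lemma isKMotzkin_decode (k : ℤ) (q : List Bool) (c : ℕ → ℕ) :
    IsKMotzkin k (decode q c) ↔
      IsDyck q ∧ ∀ i < q.length + 1, c i ≠ 0 → dheight q i = k := by
  rw [isKMotzkin_iff, isDyck_iff, msum_decode, MinOK_decode, LOK_decode]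
  simp only [zero_add]

lemma even_sum_add_length (q : List Bool) : Even ((q.map dstep).sum + q.length) := by
  induction q with
  | nil => simp
  | cons b q ih =>
    simp only [List.map_cons, List.sum_cons, List.length_cons]
    have heq : dstep b + (q.map dstep).sum + ((q.length : ℤ) + 1)
        = ((q.map dstep).sum + q.length) + (dstep b + 1) := by ring
    have hb : Even (dstep b + 1) := by cases b <;> simp [dstep]
    push_cast
    rw [heq]
    exact ih.add hb

lemma dyck_length_even {q : List Bool} (h : IsDyck q) : ∃ j, q.length = 2 * j := by
  have h1 := even_sum_add_length q
  rw [h.1, zero_add] at h1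
  have h2 : Even q.length := by exact_mod_cast h1
  obtain ⟨j, hj⟩ := h2
  exact ⟨j, by omega⟩

lemma feet_eq_filter_card (q : List Bool) (l : ℤ) :
    feet q l = ((Finset.range (q.length + 1)).filter (fun x => dheight q x = l)).card := by
  unfold feet
  rw [Finset.card_filter]
  induction (q.length + 1) with
  | zero => simp
  | succ m ih =>
    rw [List.range_succ, List.map_append, List.count_append, ih, Finset.sum_range_succ]
    have hcount : ((List.map (dheight q) [m]).count l) = if dheight q m = l then 1 else 0 := by
      rcases eq_or_ne (dheight q m) l with h | h
      · simp [h]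
      · simp [h, List.count_eq_zero, Ne.symm h]
    rw [hcount]


lemma fiber_card (n : ℕ) (k : ℤ) (q : List Bool) (hq : IsDyck q) (hlen : q.length ≤ n)
    (M : Finset (List MStep)) (hM : ∀ p, p ∈ M ↔ p.length = n ∧ IsKMotzkin k p) :
    (M.filter (fun p => dOf p = q)).card
      = Nat.choose (n - q.length + feet q k - 1) (n - q.length) := by
  classical
  set m := n - q.length with hm
  set A : Finset ℕ := (Finset.range (q.length + 1)).filter (fun x => dheight q x = k) with hA
  have hAmem : ∀ x, x ∈ A ↔ x < q.length + 1 ∧ dheight q x = k := by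
    intro x; simp [hA]
  -- the bijection
  have key : (Finset.univ : Finset (Sym ↥A m)).card
      = (M.filter (fun p => dOf p = q)).card := by
    refine Finset.card_bij
      (fun s _ => decode q (fun x => ((s : Multiset ↥A).map Subtype.val).count x)) ?_ ?_ ?_
    · -- maps into the fiber
      intro s _
      set Ms : Multiset ℕ := (s : Multiset ↥A).map Subtype.val with hMs
      have hmemA : ∀ x ∈ Ms, x ∈ A := by
        intro x hx
        obtain ⟨b, _, rfl⟩ := Multiset.mem_map.mp hx
        exact b.2
      have hcardMs : Multiset.card Ms = m := by
        rw [hMs, Multiset.card_map, Sym.card_coe]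
      have hsupp : ∀ i, Ms.count i ≠ 0 → i ∈ A := by
        intro i hi
        exact hmemA i (Multiset.count_pos.mp (Nat.pos_of_ne_zero hi))
      have hsum : ∑ i ∈ Finset.range (q.length + 1), Ms.count i = m := by
        rw [← hcardMs]
        rw [← Multiset.toFinset_sum_count_eq Ms]
        apply (Finset.sum_subset _ _).symm
        · intro x hx
          rw [Multiset.mem_toFinset] at hx
          exact Finset.mem_range.mpr ((hAmem x).mp (hmemA x hx)).1
        · intro x _ hx
          rw [Multiset.mem_toFinset] at hx
          exact Multiset.count_eq_zero_of_notMem hx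
      rw [Finset.mem_filter]
      refine ⟨(hM _).mpr ⟨?_, ?_⟩, dOf_decode q _⟩
      · rw [length_decode, hsum]; omega
      · rw [isKMotzkin_decode]
        exact ⟨hq, fun i _ hi => ((hAmem i).mp (hsupp i hi)).2⟩
    · -- injective
      intro s₁ _ s₂ _ heq
      replace heq : decode q (fun x => ((s₁ : Multiset ↥A).map Subtype.val).count x)
          = decode q (fun x => ((s₂ : Multiset ↥A).map Subtype.val).count x) := heq
      have hcnt : ∀ x, ((s₁ : Multiset ↥A).map Subtype.val).count x
          = ((s₂ : Multiset ↥A).map Subtype.val).count x := by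
        intro x
        by_cases hx : x < q.length + 1
        · have h1 := count_levels_decode q (fun x => ((s₁ : Multiset ↥A).map Subtype.val).count x) x
          have h2 := count_levels_decode q (fun x => ((s₂ : Multiset ↥A).map Subtype.val).count x) x
          rw [heq] at h1
          rw [if_pos hx] at h1 h2
          rw [← h1, ← h2]
        · have z1 : ((s₁ : Multiset ↥A).map Subtype.val).count x = 0 := by
            rw [Multiset.count_eq_zero]
            intro hmem
            obtain ⟨b, _, rfl⟩ := Multiset.mem_map.mp hmem
            exact hx ((hAmem _).mp b.2).1
          have z2 : ((s₂ : Multiset ↥A).map Subtype.val).count x = 0 := by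
            rw [Multiset.count_eq_zero]
            intro hmem
            obtain ⟨b, _, rfl⟩ := Multiset.mem_map.mp hmem
            exact hx ((hAmem _).mp b.2).1
          rw [z1, z2]
      have : (s₁ : Multiset ↥A).map Subtype.val = (s₂ : Multiset ↥A).map Subtype.val :=
        Multiset.ext.mpr hcnt
      have h2 : (s₁ : Multiset ↥A) = (s₂ : Multiset ↥A) :=
        Multiset.map_injective Subtype.val_injective this
      exact Subtype.ext h2
    · -- surjective
      intro p hp
      rw [Finset.mem_filter] at hp
      obtain ⟨hpM, hdOf⟩ := hp
      obtain ⟨hplen, hpK⟩ := (hM p).mp hpM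
      have hrec : decode q (fun i => (levels p).count i) = p := by
        rw [← hdOf]; exact decode_reconstruct p
      have hKd : IsKMotzkin k (decode q (fun i => (levels p).count i)) := by
        rw [hrec]; exact hpK
      rw [isKMotzkin_decode] at hKd
      have hmemA : ∀ x ∈ levels p, x ∈ A := by
        intro x hx
        have hcnt : (levels p).count x ≠ 0 := by
          rw [Multiset.count_ne_zero]; exact hx
        have hfx := count_levels_decode q (fun i => (levels p).count i) x
        rw [hrec] at hfx
        by_cases hxlt : x < q.length + 1
        · exact (hAmem x).mpr ⟨hxlt, hKd.2 x hxlt hcnt⟩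
        · rw [if_neg hxlt] at hfx
          exact absurd hfx hcnt
      have hcard : Multiset.card (levels p) = m := by
        have := length_eq_dOf_add_levels p
        rw [hdOf, hplen] at this
        omega
      have hcardAttach : Multiset.card
          ((levels p).attach.map (fun x => (⟨x.1, hmemA x.1 x.2⟩ : ↥A))) = m := by
        rw [Multiset.card_map, Multiset.card_attach]; exact hcard
      refine ⟨⟨(levels p).attach.map (fun x => (⟨x.1, hmemA x.1 x.2⟩ : ↥A)), hcardAttach⟩,
        Finset.mem_univ _, ?_⟩
      have hmapval : (((⟨(levels p).attach.map (fun x => (⟨x.1, hmemA x.1 x.2⟩ : ↥A)),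
          hcardAttach⟩ : Sym ↥A m) : Multiset ↥A)).map Subtype.val = levels p := by
        show ((levels p).attach.map (fun x => (⟨x.1, hmemA x.1 x.2⟩ : ↥A))).map Subtype.val
          = levels p
        rw [Multiset.map_map]
        exact Multiset.attach_map_val (levels p)
      show decode q (fun x => Multiset.count x
        ((((⟨(levels p).attach.map (fun x => (⟨x.1, hmemA x.1 x.2⟩ : ↥A)),
          hcardAttach⟩ : Sym ↥A m) : Multiset ↥A)).map Subtype.val)) = p
      rw [hmapval]
      exact hrec
  rw [← key, Finset.card_univ, Sym.card_sym_eq_choose, Fintype.card_coe,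
    ← feet_eq_filter_card]
  rw [Nat.add_comm (feet q k) m]


/-- The number of Motzkin paths of length n with all horizontal steps at level k equals
Σ_j Σ_i p(2j,k,i)·C(n-2j+i-1, n-2j). -/
theorem stmt3 (n k : ℕ) :
    Set.ncard {p : List MStep | p.length = n ∧ IsKMotzkin (k : ℤ) p} =
      ∑ j ∈ Finset.range (n / 2 + 1), ∑ i ∈ Finset.range (2 * j + 2),
        DyckFeet (2 * j) (k : ℤ) i * Nat.choose (n - 2 * j + i - 1) (n - 2 * j) := by
    classical
  have hfin : {p : List MStep | p.length = n ∧ IsKMotzkin (k : ℤ) p}.Finite :=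
    (List.finite_length_eq MStep n).subset (fun p hp => hp.1)
  rw [Set.ncard_eq_toFinset_card _ hfin]
  set M := hfin.toFinset with hMdef
  have hM : ∀ p, p ∈ M ↔ p.length = n ∧ IsKMotzkin (k : ℤ) p := by
    intro p; simp [hMdef, Set.Finite.mem_toFinset]
  have hDfin : ∀ j : ℕ, {q : List Bool | q.length = 2 * j ∧ IsDyck q}.Finite := fun j =>
    (List.finite_length_eq Bool (2 * j)).subset (fun q hq => hq.1)
  set DF : ℕ → Finset (List Bool) := fun j => (hDfin j).toFinset with hDF
  have hDFmem : ∀ j q, q ∈ DF j ↔ q.length = 2 * j ∧ IsDyck q := by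
    intro j q; simp [hDF, Set.Finite.mem_toFinset]
  have hmaps : ∀ p ∈ M, dOf p ∈ (Finset.range (n / 2 + 1)).biUnion DF := by
    intro p hp
    obtain ⟨hplen, hpK⟩ := (hM p).mp hp
    have hrec := decode_reconstruct p
    have hKd : IsKMotzkin (k : ℤ) (decode (dOf p) (fun i => (levels p).count i)) := by
      rw [hrec]; exact hpK
    rw [isKMotzkin_decode] at hKd
    have hDyck := hKd.1
    obtain ⟨j, hj⟩ := dyck_length_even hDyck
    have hle : (dOf p).length ≤ n := by
      rw [← hplen]; exact List.length_filterMap_le _ _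
    exact Finset.mem_biUnion.mpr ⟨j, Finset.mem_range.mpr (by omega),
      (hDFmem j _).mpr ⟨hj, hDyck⟩⟩
  have hdisj : (↑(Finset.range (n / 2 + 1)) : Set ℕ).PairwiseDisjoint DF := by
    intro j₁ _ j₂ _ hne
    refine Finset.disjoint_left.mpr ?_
    intro q h1 h2
    have e1 := ((hDFmem j₁ q).mp h1).1
    have e2 := ((hDFmem j₂ q).mp h2).1
    exact hne (by omega)
  rw [Finset.card_eq_sum_card_fiberwise hmaps, Finset.sum_biUnion hdisj]
  apply Finset.sum_congr rfl
  intro j hj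
  have hjn : 2 * j ≤ n := by
    have := Finset.mem_range.mp hj
    omega
  have stepA : ∑ q ∈ DF j, (M.filter (fun p => dOf p = q)).card
      = ∑ q ∈ DF j, Nat.choose (n - 2 * j + feet q (k : ℤ) - 1) (n - 2 * j) := by
    apply Finset.sum_congr rfl
    intro q hq
    obtain ⟨hqlen, hqD⟩ := (hDFmem j q).mp hq
    rw [fiber_card n (k : ℤ) q hqD (by omega) M hM, hqlen]
  rw [stepA]
  have hfeet : ∀ q ∈ DF j, feet q (k : ℤ) ∈ Finset.range (2 * j + 2) := by
    intro q hq
    obtain ⟨hqlen, _⟩ := (hDFmem j q).mp hq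
    rw [Finset.mem_range, feet_eq_filter_card]
    have := Finset.card_filter_le (Finset.range (q.length + 1))
      (fun x => dheight q x = (k : ℤ))
    rw [Finset.card_range] at this
    omega
  rw [← Finset.sum_fiberwise_of_maps_to hfeet
    (fun q => Nat.choose (n - 2 * j + feet q (k : ℤ) - 1) (n - 2 * j))]
  apply Finset.sum_congr rfl
  intro i _
  have stepC : ∑ q ∈ (DF j).filter (fun q => feet q (k : ℤ) = i),
      Nat.choose (n - 2 * j + feet q (k : ℤ) - 1) (n - 2 * j)
      = ((DF j).filter (fun q => feet q (k : ℤ) = i)).card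
        * Nat.choose (n - 2 * j + i - 1) (n - 2 * j) := by
    rw [Finset.sum_congr rfl (fun q hq => by
      rw [(Finset.mem_filter.mp hq).2]), Finset.sum_const, smul_eq_mul]
  rw [stepC]
  congr 1
  have hSfin : {q : List Bool | q.length = 2 * j ∧ IsDyck q ∧ feet q (k : ℤ) = i}.Finite :=
    (List.finite_length_eq Bool (2 * j)).subset (fun q hq => hq.1)
  rw [DyckFeet, Set.ncard_eq_toFinset_card _ hSfin]
  apply congrArg Finset.card
  ext q
  rw [Finset.mem_filter, hDFmem, Set.Finite.mem_toFinset]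
  simp only [Set.mem_setOf_eq]
  tauto
end

section
/- The number of Motzkin paths of length n in which horizontal steps at the fixed level k may each receive one of r colors is Σ_{j=0}^{⌊n/2⌋} Σ_i p(2j, k, i) · C(n - 2j + i - 1, n - 2j) · r^{n-2j}. -/
/-- A step of a Motzkin path whose horizontal steps carry one of  colors. -/
inductive CStep (r : ℕ)
  | up
  | down
  | level (c : Fin r)

/-- The vertical displacement of a colored Motzkin step. -/
def cval {r : ℕ} : CStep r → ℤ
  | .up => 1
  | .down => -1
  | .level _ => 0

/-- Height of a colored Motzkin path after its first  steps. -/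
def cheight {r : ℕ} (p : List (CStep r)) (k : ℕ) : ℤ := ((p.take k).map cval).sum

/-- A colored Motzkin path: ends at height 0 and never goes below the x-axis. -/
def IsCMotzkin {r : ℕ} (p : List (CStep r)) : Prop :=
  (p.map cval).sum = 0 ∧ ∀ k, 0 ≤ cheight p k

/-- A colored k-Motzkin path: all its (colored) horizontal steps lie at height k. -/
def IsKCMotzkin {r : ℕ} (k : ℤ) (p : List (CStep r)) : Prop :=
  IsCMotzkin p ∧ ∀ i < p.length, (∃ c, p.getD i .up = .level c) → cheight p i = k
namespace Stmt4
open List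

variable {r : ℕ}

def bstep (b : Bool) : CStep r := if b then .up else .down

def strip : List (CStep r) → List Bool
  | [] => []
  | .up :: p => true :: strip p
  | .down :: p => false :: strip p
  | .level _ :: p => strip p

def build : List Bool → List (List (Fin r)) → List (CStep r)
  | q, [] => q.map bstep
  | [], c :: _ => c.map CStep.level
  | b :: q, c :: L => c.map CStep.level ++ bstep b :: build q L

def extract : List (CStep r) → List (List (Fin r))
  | [] => [[]]
  | .level c :: p => (c :: (extract p).headI) :: (extract p).tail
  | .up :: p => [] :: extract p
  | .down :: p => [] :: extract p

@[simp] lemma strip_nil : strip (r := r) [] = [] := rfl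
@[simp] lemma strip_up (p : List (CStep r)) : strip (.up :: p) = true :: strip p := rfl
@[simp] lemma strip_down (p : List (CStep r)) : strip (.down :: p) = false :: strip p := rfl
@[simp] lemma strip_level (c : Fin r) (p : List (CStep r)) :
    strip (.level c :: p) = strip p := rfl

@[simp] lemma extract_nil : extract (r := r) [] = [[]] := rfl
@[simp] lemma extract_up (p : List (CStep r)) : extract (.up :: p) = [] :: extract p := rfl
@[simp] lemma extract_down (p : List (CStep r)) :
    extract (.down :: p) = [] :: extract p := rfl
@[simp] lemma extract_level (c : Fin r) (p : List (CStep r)) :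
    extract (.level c :: p) = (c :: (extract p).headI) :: (extract p).tail := rfl

lemma build_nil (q : List Bool) : build (r := r) q [] = q.map bstep := by
  cases q <;> rfl
lemma build_nil_cons (c : List (Fin r)) (L : List (List (Fin r))) :
    build [] (c :: L) = c.map CStep.level := rfl
lemma build_cons_cons (b : Bool) (q : List Bool) (c : List (Fin r))
    (L : List (List (Fin r))) :
    build (b :: q) (c :: L) = c.map CStep.level ++ bstep b :: build q L := rfl

lemma extract_ne_nil (p : List (CStep r)) : extract p ≠ [] := by
  cases p with
  | nil => simp
  | cons s p => cases s <;> simp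

lemma headI_cons_tail {α : Type*} [Inhabited α] (l : List α) (h : l ≠ []) :
    l.headI :: l.tail = l := by
  cases l with
  | nil => exact absurd rfl h
  | cons a l => rfl

lemma len_extract (p : List (CStep r)) : (extract p).length = (strip p).length + 1 := by
  induction p with
  | nil => simp
  | cons s p ih =>
    cases s with
    | up => simp [ih]
    | down => simp [ih]
    | level c =>
      have := extract_ne_nil p
      simp only [extract_level, strip_level, List.length_cons, List.length_tail]
      omega

lemma build_level_cons (q : List Bool) (c : Fin r) (d : List (Fin r))
    (L : List (List (Fin r))) :
    build q ((c :: d) :: L) = .level c :: build q (d :: L) := by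
  cases q <;> rfl

lemma build_strip_extract (p : List (CStep r)) : build (strip p) (extract p) = p := by
  induction p with
  | nil => rfl
  | cons s p ih =>
    cases s with
    | up =>
      rw [strip_up, extract_up, build_cons_cons, ih]
      rfl
    | down =>
      rw [strip_down, extract_down, build_cons_cons, ih]
      rfl
    | level c =>
      rw [strip_level, extract_level, build_level_cons,
        headI_cons_tail _ (extract_ne_nil p), ih]

lemma strip_map_bstep (q : List Bool) : strip (q.map (bstep (r := r))) = q := by
  induction q with
  | nil => rfl
  | cons b q ih => cases b <;> simp [bstep, ih]

lemma strip_bstep_cons (b : Bool) (p : List (CStep r)) :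
    strip (bstep b :: p) = b :: strip p := by
  cases b <;> rfl

lemma strip_levels_append (c : List (Fin r)) (p : List (CStep r)) :
    strip (c.map CStep.level ++ p) = strip p := by
  induction c with
  | nil => rfl
  | cons a c ih => simpa using ih

lemma strip_build (q : List Bool) (L : List (List (Fin r))) :
    strip (build q L) = q := by
  induction q generalizing L with
  | nil =>
    cases L with
    | nil => rfl
    | cons c L =>
      rw [build_nil_cons, show (c.map (CStep.level (r := r))) = c.map CStep.level ++ [] by
        simp, strip_levels_append]
      rfl
  | cons b q ih =>
    cases L with
    | nil => rw [build_nil]; exact strip_map_bstep _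
    | cons c L =>
      rw [build_cons_cons, strip_levels_append, strip_bstep_cons, ih]

lemma extract_levels_append (c : List (Fin r)) (p : List (CStep r)) :
    extract (c.map CStep.level ++ p) = (c ++ (extract p).headI) :: (extract p).tail := by
  induction c with
  | nil => simpa using (headI_cons_tail _ (extract_ne_nil p)).symm
  | cons a c ih => simp [ih]

lemma extract_bstep_cons (b : Bool) (p : List (CStep r)) :
    extract (bstep b :: p) = [] :: extract p := by
  cases b <;> rfl

lemma extract_build (q : List Bool) (L : List (List (Fin r)))
    (h : L.length = q.length + 1) : extract (build q L) = L := by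
  induction q generalizing L with
  | nil =>
    match L, h with
    | [c], _ =>
      rw [build_nil_cons, show (c.map (CStep.level (r := r))) = c.map CStep.level ++ [] by
        simp, extract_levels_append]
      simp
  | cons b q ih =>
    match L with
    | c :: L =>
      rw [build_cons_cons, extract_levels_append, extract_bstep_cons]
      simp [ih L (by simpa using h)]

lemma build_length (q : List Bool) (L : List (List (Fin r)))
    (h : L.length = q.length + 1) :
    (build q L).length = q.length + (L.map List.length).sum := by
  induction q generalizing L with
  | nil =>
    match L, h with
    | [c], _ => simp [build_nil_cons]
  | cons b q ih =>
    match L with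
    | c :: L =>
      rw [build_cons_cons]
      simp [ih L (by simpa using h)]
      omega

lemma length_eq_strip_add (p : List (CStep r)) :
    p.length = (strip p).length + ((extract p).map List.length).sum := by
  conv_lhs => rw [← build_strip_extract p]
  exact build_length _ _ (len_extract p)

end Stmt4
namespace Stmt4
variable {r : ℕ}

lemma sum_strip (p : List (CStep r)) :
    ((strip p).map dstep).sum = (p.map cval).sum := by
  induction p with
  | nil => rfl
  | cons s p ih => cases s <;> simp [dstep, cval, ih]

lemma strip_append (a b : List (CStep r)) : strip (a ++ b) = strip a ++ strip b := by
  induction a with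
  | nil => rfl
  | cons s a ih => cases s <;> simp [ih]

lemma cheight_eq (p : List (CStep r)) (j : ℕ) :
    cheight p j = dheight (strip p) ((strip (p.take j)).length) := by
  unfold cheight dheight
  conv_rhs => rw [show strip p = strip (p.take j) ++ strip (p.drop j) by
    rw [← strip_append, List.take_append_drop]]
  rw [List.take_left]
  exact (sum_strip (p.take j)).symm

lemma ns_surj (p : List (CStep r)) (t : ℕ) (ht : t ≤ (strip p).length) :
    ∃ j, (strip (p.take j)).length = t := by
  induction p generalizing t with
  | nil => exact ⟨0, by simpa using (Nat.le_zero.mp (by simpa using ht)).symm⟩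
  | cons s p ih =>
    cases s with
    | level c =>
      obtain ⟨j, hj⟩ := ih t (by simpa using ht)
      exact ⟨j + 1, by simpa using hj⟩
    | up =>
      cases t with
      | zero => exact ⟨0, by simp⟩
      | succ t =>
        obtain ⟨j, hj⟩ := ih t (by simpa using ht)
        exact ⟨j + 1, by simpa using hj⟩
    | down =>
      cases t with
      | zero => exact ⟨0, by simp⟩
      | succ t =>
        obtain ⟨j, hj⟩ := ih t (by simpa using ht)
        exact ⟨j + 1, by simpa using hj⟩

lemma slot_ne_nil (p : List (CStep r)) (i : ℕ) (hi : i < p.length)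
    (hc : ∃ c, p.getD i .up = .level c) :
    (extract p).getD ((strip (p.take i)).length) [] ≠ [] := by
  induction p generalizing i with
  | nil => simp at hi
  | cons s p ih =>
    cases i with
    | zero =>
      obtain ⟨c, hc⟩ := hc
      simp only [List.getD_cons_zero] at hc
      subst hc
      simp
    | succ i =>
      have hi' : i < p.length := by simpa using hi
      have hc' : ∃ c, p.getD i .up = .level c := by simpa using hc
      have key := ih i hi' hc'
      cases s with
      | up => simpa using key
      | down => simpa using key
      | level c =>
        simp only [strip_level, List.take_succ_cons, extract_level]
        cases hm : (strip (p.take i)).length with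
        | zero => simp
        | succ m =>
          rw [hm] at key
          simp only [List.getD_cons_succ]
          rw [← headI_cons_tail (extract p) (extract_ne_nil p)] at key
          simpa using key

lemma slot_exists (p : List (CStep r)) (t : ℕ)
    (ht : (extract p).getD t [] ≠ []) :
    ∃ i, i < p.length ∧ (∃ c, p.getD i .up = .level c) ∧ (strip (p.take i)).length = t := by
  induction p generalizing t with
  | nil =>
    exfalso
    cases t with
    | zero => simp at ht
    | succ t => simp at ht
  | cons s p ih =>
    cases s with
    | up =>
      cases t with
      | zero => simp at ht
      | succ t =>
        obtain ⟨i, hi, hc, hns⟩ := ih t (by simpa using ht)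
        exact ⟨i + 1, by simpa using hi, by simpa using hc, by simpa using hns⟩
    | down =>
      cases t with
      | zero => simp at ht
      | succ t =>
        obtain ⟨i, hi, hc, hns⟩ := ih t (by simpa using ht)
        exact ⟨i + 1, by simpa using hi, by simpa using hc, by simpa using hns⟩
    | level c =>
      cases t with
      | zero => exact ⟨0, by simp, ⟨c, by simp⟩, by simp⟩
      | succ t =>
        have ht' : (extract p).getD (t + 1) [] ≠ [] := by
          rw [← headI_cons_tail (extract p) (extract_ne_nil p)]
          simpa using ht
        obtain ⟨i, hi, hc, hns⟩ := ih (t + 1) ht'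
        exact ⟨i + 1, by simpa using hi, by simpa using hc, by simpa using hns⟩

lemma strip_length_le (p : List (CStep r)) : (strip p).length ≤ p.length := by
  have := length_eq_strip_add p
  omega

lemma isKC_iff (k : ℤ) (p : List (CStep r)) :
    IsKCMotzkin k p ↔ (IsDyck (strip p) ∧
      ∀ t, (extract p).getD t [] ≠ [] → dheight (strip p) t = k) := by
  constructor
  · rintro ⟨⟨hsum, hnn⟩, hlev⟩
    have hsum' : ((strip p).map dstep).sum = 0 := by rw [sum_strip]; exact hsum
    refine ⟨⟨hsum', fun t => ?_⟩, fun t ht => ?_⟩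
    · rcases le_or_gt t (strip p).length with hle | hlt
      · obtain ⟨j, hj⟩ := ns_surj p t hle
        rw [← hj, ← cheight_eq]
        exact hnn j
      · have : dheight (strip p) t = ((strip p).map dstep).sum := by
          unfold dheight
          rw [List.take_of_length_le (le_of_lt hlt)]
        rw [this, hsum']
    · obtain ⟨i, hi, hc, hns⟩ := slot_exists p t ht
      rw [← hns, ← cheight_eq]
      exact hlev i hi hc
  · rintro ⟨⟨hsum, hnn⟩, hslot⟩
    refine ⟨⟨by rw [← sum_strip]; exact hsum, fun j => ?_⟩, fun i hi hc => ?_⟩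
    · rw [cheight_eq]; exact hnn _
    · rw [cheight_eq]
      exact hslot _ (slot_ne_nil p i hi hc)

lemma dyck_sum_count (q : List Bool) :
    (q.map dstep).sum + q.length = 2 * (q.count true : ℤ) := by
  induction q with
  | nil => simp
  | cons b q ih =>
    cases b <;> simp [dstep, List.count_cons] <;> push_cast <;> omega

lemma dyck_length_even (q : List Bool) (hq : IsDyck q) : q.length % 2 = 0 := by
  have h := dyck_sum_count q
  rw [hq.1] at h
  have : q.length = 2 * q.count true := by exact_mod_cast by omega
  omega

end Stmt4
namespace Stmt4

lemma getD_tail {α : Type*} (l : List α) (t : ℕ) (d : α) :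
    l.tail.getD t d = l.getD (t + 1) d := by
  cases l <;> simp

variable (r : ℕ)

/-- Lists of lists of colors whose slots are supported on the `true` entries of a mask. -/
def Sub (m : List Bool) (h : ℕ) : Type :=
  {L : List (List (Fin r)) // L.length = m.length ∧
    (∀ t, L.getD t [] ≠ [] → m.getD t false = true) ∧ (L.map List.length).sum = h}

def subEquivFalse (m : List Bool) (h : ℕ) : Sub r (false :: m) h ≃ Sub r m h where
  toFun x := ⟨x.1.tail, by
    obtain ⟨L, h1, h2, h3⟩ := x
    match L, h1 with
    | a :: L, h1 =>
      have ha : a = [] := by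
        by_contra hne
        exact absurd (h2 0 (by simpa using hne)) (by simp)
      subst ha
      refine ⟨by simpa using h1, fun t ht => ?_, by simpa using h3⟩
      exact h2 (t + 1) (by simpa using ht)⟩
  invFun y := ⟨[] :: y.1, by
    obtain ⟨L, h1, h2, h3⟩ := y
    refine ⟨by simpa using h1, fun t ht => ?_, by simpa using h3⟩
    match t, ht with
    | t + 1, ht => exact h2 t (by simpa using ht)⟩
  left_inv x := by
    obtain ⟨L, h1, h2, h3⟩ := x
    match L, h1 with
    | a :: L, h1 =>
      have ha : a = [] := by
        by_contra hne
        exact absurd (h2 0 (by simpa using hne)) (by simp)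
      subst ha
      rfl
  right_inv y := rfl

def subEquivTrue (m : List Bool) (h : ℕ) :
    Sub r (true :: m) h ≃
      Σ a : Fin (h + 1), {c : List (Fin r) // c.length = (a : ℕ)} × Sub r m (h - a) where
  toFun x :=
    ⟨⟨x.1.headI.length, by
        obtain ⟨L, h1, h2, h3⟩ := x
        match L, h1 with
        | a :: L, h1 =>
          simp only [List.headI]
          simp only [List.map_cons, List.sum_cons] at h3
          omega⟩,
      ⟨x.1.headI, rfl⟩,
      ⟨x.1.tail, by
        obtain ⟨L, h1, h2, h3⟩ := x
        match L, h1 with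
        | a :: L, h1 =>
          refine ⟨by simpa using h1, fun t ht => ?_, ?_⟩
          · exact h2 (t + 1) (by simpa using ht)
          · simp only [List.map_cons, List.sum_cons] at h3
            simp only [List.headI, List.tail_cons]
            omega⟩⟩
  invFun y := ⟨y.2.1.1 :: y.2.2.1, by
    obtain ⟨a, ⟨c, hc⟩, ⟨L, h1, h2, h3⟩⟩ := y
    refine ⟨by simpa using h1, fun t ht => ?_, ?_⟩
    · match t with
      | 0 => simp
      | t + 1 => exact h2 t (by simpa using ht)
    · simp only [List.map_cons, List.sum_cons, h3, hc]
      have := a.isLt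
      omega⟩
  left_inv x := by
    obtain ⟨L, h1, h2, h3⟩ := x
    match L, h1 with
    | a :: L, h1 => rfl
  right_inv y := by
    obtain ⟨⟨a, ha⟩, ⟨c, hc⟩, ⟨L, h1, h2, h3⟩⟩ := y
    simp only [Fin.val_mk] at hc
    subst hc
    rfl

lemma card_col (a : ℕ) : Nat.card {c : List (Fin r) // c.length = a} = r ^ a := by
  show Nat.card (List.Vector (Fin r) a) = r ^ a
  simp [Nat.card_eq_fintype_card, card_vector]

instance finite_col (a : ℕ) : Finite {c : List (Fin r) // c.length = a} :=
  inferInstanceAs (Finite (List.Vector (Fin r) a))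

lemma finite_sub (m : List Bool) (h : ℕ) : Finite (Sub r m h) := by
  induction m generalizing h with
  | nil =>
    have : Subsingleton (Sub r [] h) := by
      constructor
      rintro ⟨L, h1, -, -⟩ ⟨L', h1', -, -⟩
      simp only [List.length_nil, List.length_eq_zero_iff] at h1 h1'
      exact Subtype.ext (h1.trans h1'.symm)
    exact Finite.of_subsingleton
  | cons b m ih =>
    cases b with
    | false => exact Finite.of_equiv _ (subEquivFalse r m h).symm
    | true =>
      have : ∀ a : Fin (h + 1), Finite ({c : List (Fin r) // c.length = (a : ℕ)} ×
          Sub r m (h - a)) := fun a => by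
        have := ih (h - a)
        infer_instance
      exact Finite.of_equiv _ (subEquivTrue r m h).symm

lemma ncard_sigma {n : ℕ} (F : Fin n → Type*) [∀ a, Finite (F a)] :
    Nat.card (Σ a, F a) = ∑ a, Nat.card (F a) := by
  have inst : ∀ a, Fintype (F a) := fun a => Fintype.ofFinite _
  simp [Nat.card_eq_fintype_card]

lemma card_sub (m : List Bool) (h : ℕ) :
    Nat.card (Sub r m h) = (h + m.count true - 1).choose h * r ^ h := by
  induction m generalizing h with
  | nil =>
    cases h with
    | zero =>
      have : Unique (Sub r [] 0) := by
        refine ⟨⟨⟨[], by simp⟩⟩, ?_⟩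
        rintro ⟨L, h1, -, -⟩
        simp only [List.length_nil, List.length_eq_zero_iff] at h1
        exact Subtype.ext h1
      simp [Nat.card_unique]
    | succ h =>
      have : IsEmpty (Sub r [] (h + 1)) := by
        constructor
        rintro ⟨L, h1, -, h3⟩
        simp only [List.length_nil, List.length_eq_zero_iff] at h1
        subst h1
        simp at h3
      rw [Nat.card_of_isEmpty]
      have : (h + 1 + List.count true [] - 1).choose (h + 1) = 0 :=
        Nat.choose_eq_zero_of_lt (by have : List.count true ([]:List Bool) = 0 := rfl; omega)
      rw [this, zero_mul]
  | cons b m ih =>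
    cases b with
    | false =>
      rw [Nat.card_congr (subEquivFalse r m h), ih]
      simp [List.count_cons]
    | true =>
      have fin1 : ∀ a : Fin (h + 1), Finite ({c : List (Fin r) // c.length = (a : ℕ)} ×
          Sub r m (h - a)) := fun a => by
        have := finite_sub r m (h - a)
        infer_instance
      rw [Nat.card_congr (subEquivTrue r m h), ncard_sigma]
      have step : ∀ a : Fin (h + 1),
          Nat.card ({c : List (Fin r) // c.length = (a : ℕ)} × Sub r m (h - a)) =
            (h - a + m.count true - 1).choose (h - a) * r ^ h := by
        intro a
        have := finite_sub r m (h - a)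
        rw [Nat.card_prod, card_col, ih]
        have ha : (a : ℕ) ≤ h := by have := a.isLt; omega
        rw [← mul_assoc, mul_comm (r ^ (a:ℕ)), mul_assoc, ← pow_add]
        congr 2
        omega
      rw [Finset.sum_congr rfl (fun a _ => step a)]
      rw [Fin.sum_univ_eq_sum_range (fun a => (h - a + m.count true - 1).choose (h - a) * r ^ h)]
      have refl := Finset.sum_range_reflect
        (fun a => (a + m.count true - 1).choose a * r ^ h) (h + 1)
      simp only [add_tsub_cancel_right] at refl
      rw [show (∑ a ∈ Finset.range (h + 1), (h - a + m.count true - 1).choose (h - a) * r ^ h)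
          = ∑ a ∈ Finset.range (h + 1), (a + m.count true - 1).choose a * r ^ h from refl]
      rw [← Finset.sum_mul]
      congr 1
      cases hcm : m.count true with
      | zero =>
        rw [Finset.sum_eq_single_of_mem 0 (by simp)]
        · simp [hcm]
        · intro b _ hb
          simp only [add_zero]
          exact Nat.choose_eq_zero_of_lt (by omega)
      | succ c =>
        have key : ∀ a ∈ Finset.range (h + 1),
            (a + (c + 1) - 1).choose a = (a + c).choose c := by
          intro a _
          have hsym := Nat.choose_symm (show c ≤ a + c by omega)
          rw [show a + c - c = a by omega] at hsym
          rw [show a + (c + 1) - 1 = a + c by omega, hsym]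
        rw [Finset.sum_congr rfl key, Nat.sum_range_add_choose h c]
        have hc2 : List.count true (true :: m) = c + 2 := by
          simp [List.count_cons, hcm]
        rw [hc2, show h + (c + 2) - 1 = h + c + 1 by omega,
          ← Nat.choose_symm (show h ≤ h + c + 1 by omega),
          show h + c + 1 - h = c + 1 by omega]
end Stmt4
namespace Stmt4
variable (r : ℕ)

def mask (q : List Bool) (k : ℤ) : List Bool :=
  (List.range (q.length + 1)).map (fun t => decide (dheight q t = k))

lemma mask_length (q : List Bool) (k : ℤ) : (mask q k).length = q.length + 1 := by
  simp [mask]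

lemma mask_getD (q : List Bool) (k : ℤ) (t : ℕ) (ht : t < q.length + 1) :
    (mask q k).getD t false = decide (dheight q t = k) := by
  rw [List.getD_eq_getElem _ _ (by rw [mask_length]; omega)]
  simp [mask]

lemma mask_count (q : List Bool) (k : ℤ) : (mask q k).count true = feet q k := by
  unfold mask feet
  rw [List.count, List.count, List.countP_map, List.countP_map]
  congr 1
  funext t
  by_cases hd : dheight q t = k <;> simp [hd]

def Slots (q : List Bool) (k : ℤ) (h : ℕ) : Type :=
  {L : List (List (Fin r)) // L.length = q.length + 1 ∧
    (∀ t, L.getD t [] ≠ [] → dheight q t = k) ∧ (L.map List.length).sum = h}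

def slotsEquiv (q : List Bool) (k : ℤ) (h : ℕ) : Slots r q k h ≃ Sub r (mask q k) h where
  toFun := fun ⟨L, h1, h2, h3⟩ => ⟨L, by
    refine ⟨by rw [mask_length]; exact h1, fun t ht => ?_, h3⟩
    have htl : t < L.length := by
      by_contra hle
      rw [List.getD_eq_default _ _ (by omega)] at ht; exact ht rfl
    rw [mask_getD _ _ _ (by omega)]
    exact decide_eq_true (h2 t ht)⟩
  invFun := fun ⟨L, h1, h2, h3⟩ => ⟨L, by
    rw [mask_length] at h1
    refine ⟨h1, fun t ht => ?_, h3⟩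
    have htl : t < L.length := by
      by_contra hle
      rw [List.getD_eq_default _ _ (by omega)] at ht; exact ht rfl
    have := h2 t ht
    rw [mask_getD _ _ _ (by omega)] at this
    exact of_decide_eq_true this⟩
  left_inv := fun ⟨L, h1, h2, h3⟩ => rfl
  right_inv := fun ⟨L, h1, h2, h3⟩ => rfl

lemma finite_slots (q : List Bool) (k : ℤ) (h : ℕ) : Finite (Slots r q k h) := by
  have := finite_sub r (mask q k) h
  exact Finite.of_equiv _ (slotsEquiv r q k h).symm

lemma card_slots (q : List Bool) (k : ℤ) (h : ℕ) :
    Nat.card (Slots r q k h) = (h + feet q k - 1).choose h * r ^ h := by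
  rw [Nat.card_congr (slotsEquiv r q k h), card_sub, mask_count]

def cstepEquiv : CStep r ≃ Bool ⊕ Fin r where
  toFun s := match s with
    | .up => Sum.inl true
    | .down => Sum.inl false
    | .level c => Sum.inr c
  invFun s := match s with
    | Sum.inl true => .up
    | Sum.inl false => .down
    | Sum.inr c => .level c
  left_inv s := by cases s <;> rfl
  right_inv s := by rcases s with (_|_) | c <;> first | rfl | (rename_i b; cases b <;> rfl)

instance : Finite (CStep r) := Finite.of_equiv _ (cstepEquiv r).symm

lemma card_filter_eq_nat_card {α : Type*} (s : Finset α) (P : α → Prop) [DecidablePred P] :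
    (s.filter P).card = Nat.card {x // x ∈ s ∧ P x} := by
  rw [← Nat.card_eq_finsetCard]
  exact (Nat.card_congr (Equiv.subtypeEquivRight (fun x => by simp))).symm

end Stmt4
namespace Stmt4

lemma fiber_card (r n j i : ℕ) (k : ℤ) (hj : j ≤ n / 2) :
    Nat.card {p : List (CStep r) // (p.length = n ∧ IsKCMotzkin k p) ∧
      (strip p).length = 2 * j ∧ feet (strip p) k = i} =
      DyckFeet (2 * j) k i * (n - 2 * j + i - 1).choose (n - 2 * j) * r ^ (n - 2 * j) := by
  classical
  set h := n - 2 * j with hh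
  have h2j : 2 * j ≤ n := by omega
  have hFfin : {p : List (CStep r) | (p.length = n ∧ IsKCMotzkin k p) ∧
      (strip p).length = 2 * j ∧ feet (strip p) k = i}.Finite :=
    (List.finite_length_eq (CStep r) n).subset (fun p hp => hp.1.1)
  have hDfin : {q : List Bool | q.length = 2 * j ∧ IsDyck q ∧ feet q k = i}.Finite :=
    (List.finite_length_eq Bool (2 * j)).subset (fun q hq => hq.1)
  have step1 : Nat.card {p : List (CStep r) // (p.length = n ∧ IsKCMotzkin k p) ∧
      (strip p).length = 2 * j ∧ feet (strip p) k = i} = hFfin.toFinset.card := by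
    rw [← Set.ncard_eq_toFinset_card _ hFfin]
    exact Nat.card_coe_set_eq _
  rw [step1]
  have hmem : ∀ p ∈ hFfin.toFinset, strip p ∈ hDfin.toFinset := by
    intro p hp
    rw [Set.Finite.mem_toFinset] at hp ⊢
    obtain ⟨⟨hlen, hKC⟩, hsl, hf⟩ := hp
    exact ⟨hsl, ((isKC_iff k p).mp hKC).1, hf⟩
  rw [Finset.card_eq_sum_card_fiberwise hmem]
  have step2 : ∀ q ∈ hDfin.toFinset,
      (hFfin.toFinset.filter (fun p => strip p = q)).card = (h + i - 1).choose h * r ^ h := by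
    intro q hq
    rw [Set.Finite.mem_toFinset] at hq
    obtain ⟨hql, hqd, hqf⟩ := hq
    rw [card_filter_eq_nat_card]
    have E : {p : List (CStep r) // p ∈ hFfin.toFinset ∧ strip p = q} ≃ Slots r q k h :=
      { toFun := fun x => ⟨extract x.1, by
          have hp := x.2.1
          have hsq := x.2.2
          rw [Set.Finite.mem_toFinset] at hp
          obtain ⟨⟨hlen, hKC⟩, hsl, hf⟩ := hp
          obtain ⟨hd, hslot⟩ := (isKC_iff k x.1).mp hKC
          refine ⟨by rw [len_extract, hsq], fun t ht => ?_, ?_⟩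
          · have := hslot t ht; rwa [hsq] at this
          · have := length_eq_strip_add x.1
            omega⟩
        invFun := fun y => ⟨build q y.1, by
          have h1 := y.2.1
          have h2 := y.2.2.1
          have h3 := y.2.2.2
          have hsb : strip (build q y.1) = q := strip_build q y.1
          have heb : extract (build q y.1) = y.1 := extract_build q y.1 h1
          refine ⟨?_, hsb⟩
          rw [Set.Finite.mem_toFinset]
          refine ⟨⟨?_, ?_⟩, ?_, ?_⟩
          · rw [build_length q y.1 h1]
            omega
          · refine (isKC_iff k _).mpr ⟨by rw [hsb]; exact hqd, fun t ht => ?_⟩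
            rw [heb] at ht
            rw [hsb]
            exact h2 t ht
          · rw [hsb, hql]
          · rw [hsb, hqf]⟩
        left_inv := fun x => Subtype.ext (by
          obtain ⟨p, hp⟩ := x
          show build q (extract p) = p
          rw [← hp.2]
          exact build_strip_extract p)
        right_inv := fun y => Subtype.ext (by
          show extract (build q y.1) = y.1
          exact extract_build q y.1 y.2.1) }
    rw [Nat.card_congr E, card_slots, hqf]
  rw [Finset.sum_congr rfl step2, Finset.sum_const, smul_eq_mul,
    ← Set.ncard_eq_toFinset_card _ hDfin]
  show DyckFeet (2 * j) k i * _ = _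
  rw [← mul_assoc]

theorem main_aux (n k r : ℕ) :
    Set.ncard {p : List (CStep r) | p.length = n ∧ IsKCMotzkin (k : ℤ) p} =
      ∑ j ∈ Finset.range (n / 2 + 1), ∑ i ∈ Finset.range (2 * j + 2),
        DyckFeet (2 * j) (k : ℤ) i * Nat.choose (n - 2 * j + i - 1) (n - 2 * j) *
          r ^ (n - 2 * j) := by
  classical
  have hS : {p : List (CStep r) | p.length = n ∧ IsKCMotzkin (k : ℤ) p}.Finite :=
    (List.finite_length_eq (CStep r) n).subset (fun p hp => hp.1)
  rw [Set.ncard_eq_toFinset_card _ hS]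
  have hmem : ∀ p ∈ hS.toFinset,
      (⟨(strip p).length / 2, feet (strip p) (k : ℤ)⟩ : Σ _ : ℕ, ℕ) ∈
        (Finset.range (n / 2 + 1)).sigma (fun j => Finset.range (2 * j + 2)) := by
    intro p hp
    rw [Set.Finite.mem_toFinset] at hp
    obtain ⟨hlen, hKC⟩ := hp
    have hd : IsDyck (strip p) := ((isKC_iff _ p).mp hKC).1
    have hev := dyck_length_even _ hd
    have hle : (strip p).length ≤ n := hlen ▸ strip_length_le p
    have hfe : feet (strip p) (k : ℤ) ≤ (strip p).length + 1 := by
      have := List.count_le_length (a := (k : ℤ))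
        (l := (List.range ((strip p).length + 1)).map (dheight (strip p)))
      simpa [feet] using this
    rw [Finset.mem_sigma]
    constructor
    · exact Finset.mem_range.mpr (show (strip p).length / 2 < n / 2 + 1 by omega)
    · exact Finset.mem_range.mpr
        (show feet (strip p) (k : ℤ) < 2 * ((strip p).length / 2) + 2 by omega)
  rw [Finset.card_eq_sum_card_fiberwise hmem, Finset.sum_sigma]
  refine Finset.sum_congr rfl (fun j hj => Finset.sum_congr rfl (fun i _ => ?_))
  rw [Finset.mem_range] at hj
  have hj' : j ≤ n / 2 := by omega
  rw [card_filter_eq_nat_card, ← fiber_card r n j i (k : ℤ) hj']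
  refine Nat.card_congr (Equiv.subtypeEquivRight (fun p => ?_))
  rw [Set.Finite.mem_toFinset]
  constructor
  · rintro ⟨hp, hfp⟩
    have hj2 : (strip p).length / 2 = j := congrArg Sigma.fst hfp
    have hi2 : feet (strip p) (k : ℤ) = i := by
      have := (Sigma.mk.inj_iff.mp hfp).2
      exact eq_of_heq this
    have hev := dyck_length_even _ ((isKC_iff _ p).mp hp.2).1
    exact ⟨hp, by omega, hi2⟩
  · rintro ⟨hp, hsl, hf⟩
    refine ⟨hp, ?_⟩
    rw [hsl, hf, show 2 * j / 2 = j by omega]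

end Stmt4

/-- The number of Motzkin paths of length n whose horizontal steps all lie at level k and
each carry one of r colors is Σ_j Σ_i p(2j,k,i)·C(n-2j+i-1, n-2j)·r^(n-2j). -/
theorem stmt4 (n k r : ℕ) :
    Set.ncard {p : List (CStep r) | p.length = n ∧ IsKCMotzkin (k : ℤ) p} =
      ∑ j ∈ Finset.range (n / 2 + 1), ∑ i ∈ Finset.range (2 * j + 2),
        DyckFeet (2 * j) (k : ℤ) i * Nat.choose (n - 2 * j + i - 1) (n - 2 * j) *
          r ^ (n - 2 * j) := by
  exact Stmt4.main_aux n k r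
end

section
/- An eventually-zero sequence of nonnegative integers I = (i_0, ..., i_f, 0, ...) with i_f its last nonzero term is the frame of some Dyck path if and only if: i_0 = 1 when f = 0; i_0 ≥ 2 when f > 0; the alternating partial sums satisfy i_1 - i_0 ≥ 0 (when f > 1), i_2 - i_1 + i_0 ≥ 2, i_3 - i_2 + i_1 - i_0 ≥ 0, i_4 - i_3 + i_2 - i_1 + i_0 ≥ 2, and so on (even-indexed alternating sums ≥ 2, odd-indexed ≥ 0, for partial sums ending strictly before f); and the full alternating sum satisfies i_0 - i_1 + i_2 - ... + (-1)^f i_f = 1. -/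
/-- The alternating sum i_m - i_{m-1} + ... + (-1)^m i_0. -/
def altA (I : ℕ → ℕ) (m : ℕ) : ℤ := ∑ t ∈ Finset.range (m + 1), (-1) ^ (m - t) * (I t : ℤ)

namespace DyckAux

def ups (p : List Bool) (l : ℤ) : ℕ :=
  (List.range p.length).countP (fun k => p.getD k false && (dheight p k == l))

def downs (p : List Bool) (l : ℤ) : ℕ :=
  (List.range p.length).countP (fun k => !(p.getD k false) && (dheight p k == l))

lemma dheight_zero (p : List Bool) : dheight p 0 = 0 := by simp [dheight]

lemma dheight_of_le (p : List Bool) {k : ℕ} (h : p.length ≤ k) :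
    dheight p k = (p.map dstep).sum := by
  simp [dheight, List.take_of_length_le h]

lemma dheight_append_of_le (p q : List Bool) {k : ℕ} (h : k ≤ p.length) :
    dheight (p ++ q) k = dheight p k := by
  simp [dheight, List.take_append_of_le_length h]

lemma dheight_append (p q : List Bool) (k : ℕ) :
    dheight (p ++ q) k = if k ≤ p.length then dheight p k
      else (p.map dstep).sum + dheight q (k - p.length) := by
  split_ifs with h
  · exact dheight_append_of_le p q h
  · have hk : k = p.length + (k - p.length) := by omega
    rw [hk, dheight, List.take_append]
    simp [dheight, List.take_of_length_le]

lemma dheight_succ (p : List Bool) {k : ℕ} (h : k < p.length) :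
    dheight p (k + 1) = dheight p k + dstep (p.getD k false) := by
  rw [dheight, List.take_succ]
  have : p[k]? = some (p.getD k false) := by
    rw [List.getD_eq_getElem?_getD, List.getElem?_eq_getElem h]
    simp [List.getElem?_eq_getElem h]
  rw [this]
  simp [dheight]

lemma feet_eq_countP (p : List Bool) (l : ℤ) :
    feet p l = (List.range (p.length + 1)).countP (fun k => dheight p k == l) := by
  rw [feet, List.count, List.countP_map]; rfl

lemma ups_append_single (p : List Bool) (b : Bool) (l : ℤ) :
    ups (p ++ [b]) l = ups p l +
      if b && ((p.map dstep).sum == l) then 1 else 0 := by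
  unfold ups
  rw [List.length_append, List.length_singleton, List.range_succ, List.countP_append]
  congr 1
  · apply List.countP_congr
    intro k hk
    rw [List.mem_range] at hk
    rw [List.getD_append _ _ _ _ hk, dheight_append_of_le p [b] (le_of_lt hk)]
  · have hb : (p ++ [b]).getD p.length false = b := by
      rw [List.getD_append_right _ _ _ _ (le_refl _)]; simp
    rw [List.getD_eq_getElem?_getD] at hb
    have hh : dheight (p ++ [b]) p.length = (p.map dstep).sum := by
      rw [dheight_append_of_le p [b] (le_refl _), dheight_of_le p (le_refl _)]
    simp [List.countP_singleton, hb, hh]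

lemma downs_append_single (p : List Bool) (b : Bool) (l : ℤ) :
    downs (p ++ [b]) l = downs p l +
      if !b && ((p.map dstep).sum == l) then 1 else 0 := by
  unfold downs
  rw [List.length_append, List.length_singleton, List.range_succ, List.countP_append]
  congr 1
  · apply List.countP_congr
    intro k hk
    rw [List.mem_range] at hk
    rw [List.getD_append _ _ _ _ hk, dheight_append_of_le p [b] (le_of_lt hk)]
  · have hb : (p ++ [b]).getD p.length false = b := by
      rw [List.getD_append_right _ _ _ _ (le_refl _)]; simp
    rw [List.getD_eq_getElem?_getD] at hb
    have hh : dheight (p ++ [b]) p.length = (p.map dstep).sum := by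
      rw [dheight_append_of_le p [b] (le_refl _), dheight_of_le p (le_refl _)]
    simp [List.countP_singleton, hb, hh]

lemma feet_append_single (p : List Bool) (b : Bool) (l : ℤ) :
    feet (p ++ [b]) l = feet p l +
      if ((p.map dstep).sum + dstep b == l) then 1 else 0 := by
  rw [feet_eq_countP, feet_eq_countP]
  rw [List.length_append, List.length_singleton]
  rw [show p.length + 1 + 1 = (p.length + 1) + 1 from rfl, List.range_succ, List.countP_append]
  congr 1
  · apply List.countP_congr
    intro k hk
    rw [List.mem_range] at hk
    rw [dheight_append_of_le p [b] (by omega)]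
  · have h1 : dheight (p ++ [b]) (p.length + 1) = (p.map dstep).sum + dstep b := by
      rw [dheight_of_le _ (by simp)]
      simp
    simp [List.countP_singleton, h1]

lemma cross (p : List Bool) (l : ℤ) :
    (ups p l : ℤ) - downs p (l+1) =
      if 0 ≤ l ∧ l < (p.map dstep).sum then 1
      else if (p.map dstep).sum ≤ l ∧ l < 0 then -1 else 0 := by
  induction p using List.reverseRecOn with
  | nil => simp [ups, downs]; split_ifs <;> omega
  | append_singleton p b ih =>
    rw [ups_append_single, downs_append_single, List.map_append, List.sum_append]
    cases b <;> simp [dstep] <;> push_cast <;>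
      split_ifs at ih ⊢ <;> omega

lemma feet_formula_gen (p : List Bool) (l : ℤ) :
    (feet p l : ℤ) = (if l = 0 then 1 else 0) + ups p (l-1) + downs p (l+1) := by
  induction p using List.reverseRecOn with
  | nil =>
    simp [feet_eq_countP, ups, downs, dheight]
    split_ifs <;> simp_all <;> omega
  | append_singleton p b ih =>
    rw [feet_append_single, ups_append_single, downs_append_single]
    cases b <;> simp [dstep] <;> push_cast <;>
      split_ifs at ih ⊢ <;> omega

lemma ups_neg (p : List Bool) (hd : IsDyck p) {l : ℤ} (hl : l < 0) : ups p l = 0 := by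
  rw [ups, List.countP_eq_zero]
  intro k _
  simp only [Bool.and_eq_true, beq_iff_eq]
  rintro ⟨-, h⟩
  have := hd.2 k
  omega

lemma downs_eq_ups (p : List Bool) (hd : IsDyck p) {l : ℤ} (hl : 0 ≤ l) :
    downs p (l + 1) = ups p l := by
  have := cross p l
  rw [hd.1] at this
  split_ifs at this <;> omega

lemma feet_formula (p : List Bool) (hd : IsDyck p) (l : ℤ) (hl : 0 ≤ l) :
    (feet p l : ℤ) = (if l = 0 then 1 else 0) + ups p (l-1) + ups p l := by
  rw [feet_formula_gen, downs_eq_ups p hd hl]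

lemma feet_zero_eq (p : List Bool) (hd : IsDyck p) :
    feet p 0 = 1 + ups p 0 := by
  have h := feet_formula p hd 0 le_rfl
  rw [ups_neg p hd (by norm_num : (0:ℤ)-1 < 0)] at h
  omega

lemma feet_succ_eq (p : List Bool) (hd : IsDyck p) (k : ℕ) :
    feet p ((k:ℤ) + 1) = ups p k + ups p ((k:ℤ)+1) := by
  have h := feet_formula p hd ((k:ℤ)+1) (by positivity)
  have hne : ((k:ℤ)+1) ≠ 0 := by omega
  rw [if_neg hne] at h
  have : ((k:ℤ) + 1 - 1) = (k:ℤ) := by ring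
  rw [this] at h
  omega

lemma exists_up (p : List Bool) (hd : IsDyck p) :
    ∀ (K : ℕ), K ≤ p.length → ∀ (l : ℤ), 0 ≤ l → l < dheight p K → 0 < ups p l := by
  intro K
  induction K with
  | zero => intro _ l h0 hlt; rw [dheight_zero] at hlt; omega
  | succ K ih =>
    intro hK l h0 hlt
    by_cases hc : dheight p K ≤ l
    · have hKlen : K < p.length := by omega
      have hstep := dheight_succ p hKlen
      have hpm : dstep (p.getD K false) = 1 ∨ dstep (p.getD K false) = -1 := by
        cases p.getD K false <;> simp [dstep]
      have hup : p.getD K false = true := by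
        rcases hpm with h | h
        · cases hb : p.getD K false
          · rw [hb] at h; simp [dstep] at h
          · rfl
        · rw [h] at hstep; omega
      have heq : dheight p K = l := by
        rw [hup] at hstep; simp [dstep] at hstep; omega
      rw [ups, List.countP_pos_iff]
      refine ⟨K, List.mem_range.mpr hKlen, ?_⟩
      rw [List.getD_eq_getElem?_getD] at hup
      simp [hup, heq]
    · exact ih (by omega) l h0 (by omega)

lemma altA_zero (I : ℕ → ℕ) : altA I 0 = (I 0 : ℤ) := by simp [altA]

lemma altA_succ (I : ℕ → ℕ) (m : ℕ) : altA I (m+1) = (I (m+1) : ℤ) - altA I m := by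
  rw [altA, altA, Finset.sum_range_succ]
  have h1 : ∀ t ∈ Finset.range (m+1),
      (-1:ℤ) ^ (m + 1 - t) * (I t : ℤ) = -((-1:ℤ) ^ (m - t) * (I t : ℤ)) := by
    intro t ht
    rw [Finset.mem_range] at ht
    have : m + 1 - t = (m - t) + 1 := by omega
    rw [this, pow_succ]
    ring
  rw [Finset.sum_congr rfl h1, Finset.sum_neg_distrib]
  simp
  ring

lemma altA_frame (p : List Bool) (hd : IsDyck p) (m : ℕ) :
    altA (frame p) m = (ups p m : ℤ) + (-1)^m := by
  induction m with
  | zero =>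
    rw [altA_zero]
    have h : frame p 0 = 1 + ups p 0 := by
      simpa [frame] using feet_zero_eq p hd
    rw [h]; push_cast; ring
  | succ m ih =>
    rw [altA_succ, ih]
    have h := feet_succ_eq p hd m
    simp only [frame]
    push_cast
    rw [pow_succ]
    push_cast at h
    omega

lemma alt_total (I : ℕ → ℕ) (f : ℕ) :
    (∑ t ∈ Finset.range (f + 1), (-1:ℤ) ^ t * (I t : ℤ)) = (-1)^f * altA I f := by
  rw [altA, Finset.mul_sum]
  apply Finset.sum_congr rfl
  intro t ht
  rw [Finset.mem_range] at ht
  rw [← mul_assoc, ← pow_add]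
  have : f + (f - t) = 2 * (f - t) + t := by omega
  rw [this, pow_add, pow_mul]
  norm_num

def zig : ℕ → List Bool
  | 0 => []
  | n+1 => true :: false :: zig n

def build : List ℕ → List Bool
  | [] => []
  | a :: L => zig (a-1) ++ ([true] ++ (build L ++ [false]))

lemma sum_td : ((([true, false]).map dstep).sum) = 0 := by simp [dstep]

lemma isDyck_nil : IsDyck [] := ⟨by simp, fun k => by simp [dheight]⟩

lemma isDyck_append {p q : List Bool} (hp : IsDyck p) (hq : IsDyck q) : IsDyck (p ++ q) := by
  constructor
  · simp [hp.1, hq.1]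
  · intro k
    rw [dheight_append]
    split_ifs
    · exact hp.2 k
    · rw [hp.1]
      simpa using hq.2 (k - p.length)

lemma isDyck_td : IsDyck [true, false] := by
  constructor
  · simp [dstep]
  · intro k
    match k with
    | 0 => simp [dheight]
    | 1 => simp [dheight, dstep]
    | (n+2) =>
      rw [dheight_of_le _ (by simp)]
      simp [dstep]

lemma isDyck_zig (n : ℕ) : IsDyck (zig n) := by
  induction n with
  | zero => exact isDyck_nil
  | succ n ih => exact isDyck_append isDyck_td ih

lemma isDyck_wrap {q : List Bool} (hq : IsDyck q) : IsDyck ([true] ++ (q ++ [false])) := by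
  constructor
  · simp [dstep, hq.1]
  · intro k
    rw [dheight_append]
    simp only [List.length_singleton]
    split_ifs with h
    · interval_cases k
      · simp [dheight]
      · simp [dheight, dstep]
    · have h1 : ((([true]:List Bool)).map dstep).sum = 1 := by simp [dstep]
      rw [h1, dheight_append]
      split_ifs with h2
      · have := hq.2 (k - 1); omega
      · rw [hq.1]
        have h3 : ∀ j, (-1:ℤ) ≤ dheight [false] j := by
          intro j
          match j with
          | 0 => simp [dheight]
          | (m+1) => rw [dheight_of_le _ (by simp)]; simp [dstep]
        have := h3 (k - 1 - q.length); omega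

lemma isDyck_build (L : List ℕ) : IsDyck (build L) := by
  induction L with
  | nil => exact isDyck_nil
  | cons a L ih => exact isDyck_append (isDyck_zig (a-1)) (isDyck_wrap ih)

lemma ups_nil (l : ℤ) : ups [] l = 0 := rfl

lemma ups_append (p q : List Bool) (l : ℤ) :
    ups (p ++ q) l = ups p l + ups q (l - (p.map dstep).sum) := by
  induction q using List.reverseRecOn with
  | nil => simp [ups_nil]
  | append_singleton q b ih =>
    rw [← List.append_assoc, ups_append_single, ih, ups_append_single]
    have hc : ((((p ++ q).map dstep).sum == l) : Bool) =
        (((q.map dstep).sum == l - (p.map dstep).sum) : Bool) := by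
      apply Bool.coe_iff_coe.mp
      simp only [List.map_append, List.sum_append, beq_iff_eq]
      omega
    rw [hc, Nat.add_assoc]

lemma ups_true (l : ℤ) : ups [true] l = if l = 0 then 1 else 0 := by
  unfold ups
  simp [List.range_succ, dheight]
  split_ifs with h1 h2 h2 <;> simp_all <;> omega

lemma ups_false (l : ℤ) : ups [false] l = 0 := by
  unfold ups
  simp [List.range_succ]

lemma ups_td (l : ℤ) : ups [true, false] l = if l = 0 then 1 else 0 := by
  have : ([true, false] : List Bool) = [true] ++ [false] := rfl
  rw [this, ups_append, ups_true, ups_false]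
  omega

lemma ups_zig (n : ℕ) (l : ℤ) : ups (zig n) l = if l = 0 then n else 0 := by
  induction n with
  | zero => simp [zig, ups_nil]
  | succ n ih =>
    have : zig (n+1) = [true, false] ++ zig n := rfl
    rw [this, ups_append, ups_td, sum_td, sub_zero, ih]
    split_ifs with h1 h2 h2 <;> simp_all <;> omega

def uAt : List ℕ → ℤ → ℕ
  | [], _ => 0
  | a :: L, l => if l = 0 then a else if l < 0 then 0 else uAt L (l-1)

lemma uAt_neg (L : List ℕ) {l : ℤ} (hl : l < 0) : uAt L l = 0 := by
  cases L with
  | nil => rfl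
  | cons a L =>
    rw [uAt, if_neg (by omega), if_pos hl]

lemma uAt_ge (L : List ℕ) : ∀ {l : ℤ}, (L.length : ℤ) ≤ l → uAt L l = 0 := by
  induction L with
  | nil => intro l _; rfl
  | cons a L ih =>
    intro l hl
    simp only [List.length_cons] at hl
    push_cast at hl
    rw [uAt, if_neg (by omega), if_neg (by omega)]
    exact ih (by omega)

lemma ups_build (L : List ℕ) (hL : ∀ a ∈ L, 1 ≤ a) (l : ℤ) :
    ups (build L) l = uAt L l := by
  induction L generalizing l with
  | nil => simp [build, ups_nil, uAt]
  | cons a L ih =>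
    have hz : ((zig (a-1)).map dstep).sum = 0 := (isDyck_zig (a-1)).1
    have hb : ((build L).map dstep).sum = 0 := (isDyck_build L).1
    have ht : (([true] : List Bool).map dstep).sum = 1 := by simp [dstep]
    rw [build, ups_append, hz, ups_append, ht, ups_append, hb, ups_zig, ups_true, ups_false]
    rw [sub_zero]
    have ha : 1 ≤ a := hL a List.mem_cons_self
    have ihL := ih (fun b hb => hL b (List.mem_cons_of_mem a hb))
    rw [ihL (l - 1)]
    rw [uAt]
    split_ifs with h1 h2
    · have h0 : uAt L (l-1) = 0 := uAt_neg L (by omega)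
      omega
    · have h0 : uAt L (l-1) = 0 := uAt_neg L (by omega)
      omega
    · omega

lemma uAt_map_range : ∀ (n : ℕ) (g : ℕ → ℕ) (k : ℕ), k < n →
    uAt ((List.range n).map g) (k : ℤ) = g k := by
  intro n
  induction n with
  | zero => intro g k hk; omega
  | succ n ih =>
    intro g k hk
    rw [List.range_succ_eq_map, List.map_cons, List.map_map]
    cases k with
    | zero => simp [uAt]
    | succ k =>
      rw [uAt, if_neg (by push_cast; omega), if_neg (by push_cast; omega)]
      have hc : ((k+1 : ℕ) : ℤ) - 1 = (k : ℤ) := by push_cast; ring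
      rw [hc, ih (g ∘ Nat.succ) k (by omega)]
      rfl

lemma frame_build (L : List ℕ) (hL : ∀ a ∈ L, 1 ≤ a) (k : ℕ) :
    frame (build L) k = (if k = 0 then 1 else 0) + uAt L ((k:ℤ)-1) + uAt L (k:ℤ) := by
  have h := feet_formula (build L) (isDyck_build L) (k:ℤ) (by positivity)
  rw [ups_build L hL, ups_build L hL] at h
  show feet (build L) (k:ℤ) = _
  rcases eq_or_ne k 0 with rfl | hk
  · rw [if_pos rfl]
    rw [if_pos (by norm_num)] at h
    omega
  · rw [if_neg hk]
    rw [if_neg (by exact_mod_cast hk)] at h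
    omega

end DyckAux

lemma DyckAux.neg_one_pow_pred {k : ℕ} (hk : 1 ≤ k) : ((-1:ℤ))^(k-1) + ((-1:ℤ))^k = 0 := by
  rcases Nat.even_or_odd k with he | ho
  · rw [he.neg_one_pow, (Nat.Even.sub_odd hk he odd_one).neg_one_pow]; ring
  · rw [ho.neg_one_pow, (Nat.Odd.sub_odd ho odd_one).neg_one_pow]; ring


open DyckAux in
/-- Characterization of admissible frames: an eventually zero sequence with last nonzero
entry at index f is the frame of a Dyck path iff i_0 = 1 (f = 0) or i_0 ≥ 2 (f > 0),
the odd alternating partial sums (ending before f) are ≥ 0, the even ones are ≥ 2,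
and the full alternating sum i_0 - i_1 + ... + (-1)^f i_f equals 1. -/
theorem stmt11 (I : ℕ → ℕ) (f : ℕ) (hf : I f ≠ 0) (hz : ∀ k > f, I k = 0) :
    Admissible I ↔
      ((f = 0 → I 0 = 1) ∧ (0 < f → 2 ≤ I 0) ∧
       (∀ m, 0 < m → m < f → (Odd m → 0 ≤ altA I m) ∧ (Even m → 2 ≤ altA I m)) ∧
       (∑ t ∈ Finset.range (f + 1), (-1) ^ t * (I t : ℤ)) = 1) := by
  constructor
  · rintro ⟨p, hd, rfl⟩
    have hup_f : ups p (f:ℤ) = 0 := by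
      have h0 : frame p (f+1) = 0 := hz (f+1) (by omega)
      have h1 := feet_succ_eq p hd f
      have h2 : feet p ((f:ℤ)+1) = 0 := by
        rw [show ((f:ℤ)+1) = (((f+1:ℕ)):ℤ) by push_cast; ring]
        exact h0
      omega
    have hpt : ∃ K, K ≤ p.length ∧ dheight p K = (f:ℤ) := by
      have h0 : feet p (f:ℤ) ≠ 0 := hf
      rw [feet_eq_countP] at h0
      have hpos := Nat.pos_of_ne_zero h0
      rw [List.countP_pos_iff] at hpos
      obtain ⟨K, hK, hKe⟩ := hpos
      rw [List.mem_range] at hK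
      refine ⟨K, by omega, ?_⟩
      simpa using hKe
    have hup_lt : ∀ m : ℕ, m < f → 0 < ups p (m:ℤ) := by
      intro m hm
      obtain ⟨K, hK1, hK2⟩ := hpt
      exact exists_up p hd K hK1 (m:ℤ) (by positivity) (by rw [hK2]; exact_mod_cast hm)
    refine ⟨?_, ?_, ?_, ?_⟩
    · intro hf0
      have h0 := feet_zero_eq p hd
      have h1 : ups p ((0:ℕ):ℤ) = 0 := by rw [hf0] at hup_f; exact_mod_cast hup_f
      show feet p ((0:ℕ):ℤ) = 1
      rw [show (((0:ℕ)):ℤ) = (0:ℤ) by norm_num] at *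
      omega
    · intro hf0
      have h0 := feet_zero_eq p hd
      have h1 := hup_lt 0 hf0
      show 2 ≤ feet p ((0:ℕ):ℤ)
      rw [show (((0:ℕ)):ℤ) = (0:ℤ) by norm_num] at *
      omega
    · intro m hm0 hmf
      have h := altA_frame p hd m
      have h1 := hup_lt m hmf
      constructor
      · intro hodd
        rw [h, hodd.neg_one_pow]
        omega
      · intro heven
        rw [h, heven.neg_one_pow]
        omega
    · rw [alt_total, altA_frame p hd f, hup_f]
      push_cast
      rw [zero_add, ← pow_add, show f + f = 2 * f by ring, pow_mul]
      norm_num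
  · rintro ⟨h1, h2, h3, h4⟩
    rcases Nat.eq_zero_or_pos f with hf0 | hfpos
    · subst hf0
      refine ⟨build [], isDyck_build [], ?_⟩
      funext k
      rw [frame_build [] (by simp) k]
      rcases eq_or_ne k 0 with rfl | hk
      · simpa [uAt] using (h1 rfl).symm
      · rw [if_neg hk]
        have : uAt [] ((k:ℤ)-1) = 0 := rfl
        rw [this]
        have : uAt [] ((k:ℤ)) = 0 := rfl
        rw [this, hz k (by omega)]
    · -- f ≥ 1
      have haf : altA I f = (-1)^f := by
        rw [alt_total] at h4
        rcases Nat.even_or_odd f with he | ho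
        · rw [he.neg_one_pow] at h4 ⊢; omega
        · rw [ho.neg_one_pow] at h4 ⊢; omega
      set g : ℕ → ℕ := fun k => (altA I k - (-1)^k).toNat with hgdef
      have hu : ∀ k, k < f → 1 ≤ altA I k - (-1)^k := by
        intro k hk
        rcases Nat.eq_zero_or_pos k with rfl | hkpos
        · rw [altA_zero]
          have := h2 hfpos
          simp
          omega
        · rcases Nat.even_or_odd k with he | ho
          · have := (h3 k hkpos hk).2 he
            rw [he.neg_one_pow]
            omega
          · have := (h3 k hkpos hk).1 ho
            rw [ho.neg_one_pow]
            omega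
      have hg : ∀ k, k < f → (g k : ℤ) = altA I k - (-1)^k := by
        intro k hk
        rw [hgdef]
        exact Int.toNat_of_nonneg (by have := hu k hk; omega)
      set L : List ℕ := (List.range f).map g with hLdef
      have hLlen : L.length = f := by simp [hLdef]
      have hLmem : ∀ a ∈ L, 1 ≤ a := by
        intro a ha
        rw [hLdef, List.mem_map] at ha
        obtain ⟨k, hk, rfl⟩ := ha
        rw [List.mem_range] at hk
        have := hg k hk
        have := hu k hk
        omega
      refine ⟨build L, isDyck_build L, ?_⟩
      funext k
      rw [frame_build L hLmem k]
      rcases eq_or_ne k 0 with rfl | hk0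
      · rw [if_pos rfl, uAt_neg L (by norm_num)]
        have h5 : uAt L ((0:ℕ):ℤ) = g 0 := uAt_map_range f g 0 hfpos
        rw [h5]
        have h6 := hg 0 hfpos
        rw [altA_zero] at h6
        have h7 : ((-1:ℤ))^(0:ℕ) = 1 := by norm_num
        rw [h7] at h6
        omega
      · rw [if_neg hk0]
        have hk1 : 1 ≤ k := by omega
        rcases lt_trichotomy k f with hkf | hkf | hkf
        · -- 1 ≤ k < f
          have e1 : ((k:ℤ)-1) = (((k-1:ℕ)):ℤ) := by push_cast; omega
          rw [e1, uAt_map_range f g (k-1) (by omega), uAt_map_range f g k hkf]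
          have hg1 := hg (k-1) (by omega)
          have hg2 := hg k hkf
          have hrec := altA_succ I (k-1)
          rw [show k - 1 + 1 = k by omega] at hrec
          have hpow := neg_one_pow_pred hk1
          omega
        · -- k = f
          subst hkf
          have e1 : ((k:ℤ)-1) = (((k-1:ℕ)):ℤ) := by push_cast; omega
          rw [e1, uAt_map_range k g (k-1) (by omega), uAt_ge L (by rw [hLlen])]
          have hg1 := hg (k-1) (by omega)
          have hrec := altA_succ I (k-1)
          rw [show k - 1 + 1 = k by omega] at hrec
          have hpow := neg_one_pow_pred hk1
          rw [haf] at hrec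
          omega
        · -- k > f
          rw [uAt_ge L (by rw [hLlen]; push_cast; omega), uAt_ge L (by rw [hLlen]; push_cast; omega)]
          rw [hz k hkf]
end

section
/- If (i_0, i_1, ..., i_f, 0, ...) is the frame of a Dyck path with last nonzero entry i_f and f ≥ 1, then i_{f-1} > i_f. -/
lemma dheight_succ (p : List Bool) (k : ℕ) (hk : k < p.length) :
    dheight p (k+1) = dheight p k + 1 ∨ dheight p (k+1) = dheight p k - 1 := by
  unfold dheight
  rw [List.take_succ]
  cases h : p[k]? with
  | none => rw [List.getElem?_eq_none_iff] at h; omega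
  | some b => cases b <;> simp [dstep, sub_eq_add_neg]

lemma feet_eq_card (p : List Bool) (l : ℤ) :
    feet p l = ((Finset.range (p.length+1)).filter (fun k => dheight p k = l)).card := by
  unfold feet
  rw [List.count_eq_countP, List.countP_map, List.countP_eq_length_filter]
  rfl

/-- If f ≥ 1 is the maximal height of a Dyck path, then the frame satisfies i_{f-1} > i_f. -/
theorem stmt12 (p : List Bool) (hp : IsDyck p) (f : ℕ) (hf1 : 1 ≤ f)
    (hf : frame p f ≠ 0) (hz : ∀ k > f, frame p k = 0) :
    frame p f < frame p (f - 1) := by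
  set n := p.length with hn
  have hdn : dheight p n = 0 := by
    unfold dheight; rw [List.take_length]; exact hp.1
  have hd0 : dheight p 0 = 0 := rfl
  -- all heights are ≤ f
  have hbound : ∀ k, k ≤ n → dheight p k ≤ (f : ℤ) := by
    intro k hk
    by_contra hgt
    push_neg at hgt
    have hpos : 0 ≤ dheight p k := hp.2 k
    set m := (dheight p k).toNat with hm
    have hmf : m > f := by omega
    have : frame p m ≠ 0 := by
      rw [frame, feet_eq_card]
      have hkmem : k ∈ (Finset.range (p.length+1)).filter (fun j => dheight p j = (m : ℤ)) := by
        simp only [Finset.mem_filter, Finset.mem_range]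
        exact ⟨by omega, (Int.toNat_of_nonneg hpos).symm⟩
      have := Finset.card_pos.mpr ⟨k, hkmem⟩
      omega
    exact this (hz m hmf)
  set A := (Finset.range (n+1)).filter (fun k => dheight p k = (f : ℤ)) with hA
  set B := (Finset.range (n+1)).filter (fun k => dheight p k = (f : ℤ) - 1) with hB
  have hframef : frame p f = A.card := by rw [frame, feet_eq_card]
  have hframef1 : frame p (f-1) = B.card := by
    rw [frame, feet_eq_card]
    congr 1
    ext k
    have : ((f - 1 : ℕ) : ℤ) = (f : ℤ) - 1 := by omega
    simp only [hB, Finset.mem_filter, Finset.mem_range, this, hn]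
  -- elements of A are interior
  have hAmem : ∀ k ∈ A, 1 ≤ k ∧ k < n := by
    intro k hk
    rw [hA, Finset.mem_filter, Finset.mem_range] at hk
    obtain ⟨hk1, hk2⟩ := hk
    constructor
    · rcases Nat.eq_zero_or_pos k with h | h
      · subst h; rw [hd0] at hk2; omega
      · exact h
    · rcases Nat.lt_or_ge k n with h | h
      · exact h
      · exfalso; have : k = n := by omega
        rw [this, hdn] at hk2; omega
  -- image of A under +1 lands in B
  have himg : ∀ k ∈ A, k + 1 ∈ B := by
    intro k hk
    obtain ⟨hk1, hk2⟩ := hAmem k hk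
    rw [hA, Finset.mem_filter] at hk
    rw [hB, Finset.mem_filter, Finset.mem_range]
    refine ⟨by omega, ?_⟩
    rcases dheight_succ p k hk2 with h | h
    · exfalso
      have := hbound (k+1) (by omega)
      rw [h, hk.2] at this; omega
    · rw [h, hk.2]
  -- A is nonempty
  have hAne : A.Nonempty := by
    rw [← Finset.card_pos]; omega
  set k₀ := A.min' hAne with hk₀
  have hk₀A : k₀ ∈ A := A.min'_mem hAne
  obtain ⟨hk₀1, hk₀n⟩ := hAmem k₀ hk₀A
  have hk₀h : dheight p k₀ = (f : ℤ) := by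
    have := hk₀A; rw [hA, Finset.mem_filter] at this; exact this.2
  -- k₀ - 1 is in B
  have hprev : k₀ - 1 ∈ B := by
    rw [hB, Finset.mem_filter, Finset.mem_range]
    refine ⟨by omega, ?_⟩
    have hsucc : (k₀ - 1) + 1 = k₀ := by omega
    rcases dheight_succ p (k₀ - 1) (by omega) with h | h <;> rw [hsucc, hk₀h] at h
    · omega
    · exfalso
      have := hbound (k₀ - 1) (by omega)
      omega
  -- k₀ - 1 is not in the image
  have hnotimg : k₀ - 1 ∉ A.image (· + 1) := by
    intro hmem
    rw [Finset.mem_image] at hmem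
    obtain ⟨a, ha, hae⟩ := hmem
    have hae' : a + 1 = k₀ - 1 := hae
    have := A.min'_le a ha
    omega
  have hss : A.image (· + 1) ⊂ B := by
    constructor
    · intro x hx
      rw [Finset.mem_image] at hx
      obtain ⟨a, ha, hae⟩ := hx
      exact hae ▸ himg a ha
    · intro hsub
      exact hnotimg (hsub hprev)
  have hcard : (A.image (· + 1)).card = A.card :=
    Finset.card_image_of_injective _ (fun a b h => by omega)
  have := Finset.card_lt_card hss
  omega
end
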